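/- Consider the triangle Δ₀ with vertices A₀ = (−1, −u), B₀ = (s, t), C₀ = (1, u), where 0 ≤ s ≤ 1.00001, and let Δ₁ be its inside contraction replacing A₀, with vertices A₁ = (¼s − ¼, ¼t − ¼u), B₀, C₀. Then the width (max pairwise difference of first coordinates) satisfies width(Δ₀)/width(Δ₁) ≥ 8/5. -/

import Mathlib

/-- Width of a triple of points: max pairwise absolute difference of first coordinates. -/
noncomputable def triWidth (a b c : ℝ × ℝ) : ℝ :=
  max (max |a.1 - b.1| |a.1 - c.1|) |b.1 - c.1|

/-- For the triangle Δ₀ with vertices `(−1, −u)`, `(s, t)`, `(1, u)` with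
`0 ≤ s ≤ 1.00001`, if Δ₁ is its inside contraction replacing `(−1, −u)`, then
`width(Δ₀)/width(Δ₁) ≥ 8/5`. -/
theorem width_ratio_after_inside_contraction
    (s t u : ℝ) (hs0 : 0 ≤ s) (hs1 : s ≤ 1.00001) :
    triWidth ((-1 : ℝ), -u) (s, t) ((1 : ℝ), u) /
        triWidth (s / 4 - 1 / 4, t / 4 - u / 4) (s, t) ((1 : ℝ), u) ≥ 8 / 5 := by
  have hs1' : s ≤ 1.00001 := hs1
  norm_num at hs1'
  unfold triWidth
  simp only
  have habs1 : |(-1:ℝ) - s| = 1 + s := by rw [abs_of_nonpos (by linarith)]; ring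
  have habs2 : |(-1:ℝ) - 1| = 2 := by norm_num
  have habs3 : |(s/4 - 1/4) - s| = 3*s/4 + 1/4 := by
    rw [abs_of_nonpos (by linarith)]; ring
  have habs4 : |(s/4 - 1/4) - 1| = 5/4 - s/4 := by
    rw [abs_of_nonpos (by linarith)]; ring
  have hb : |s - 1| ≤ 1 := abs_le.mpr ⟨by linarith, by linarith⟩
  rw [habs1, habs2, habs3, habs4]
  set D := max (max (3*s/4 + 1/4) (5/4 - s/4)) |s - 1| with hDdef
  set N := max (max (1 + s) 2) |s - 1| with hNdef
  have hD : 0 < D := lt_of_lt_of_le (by linarith : (0:ℝ) < 3*s/4 + 1/4)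
    (le_trans (le_max_left _ _) (le_max_left _ _))
  have hN1 : 1 + s ≤ N := le_trans (le_max_left _ _) (le_max_left _ _)
  have hN2 : (2:ℝ) ≤ N := le_trans (le_max_right _ _) (le_max_left _ _)
  have hDle : D ≤ 5/8 * N := by
    apply max_le (max_le ?_ ?_) ?_
    · linarith
    · linarith
    · linarith
  rw [ge_iff_le, le_div_iff₀ hD]
  linarith
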